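/- arXiv:1203.0084 — 4 statements merged into one kernel-verified Lean document; each statement's English description precedes it below -/
import Mathlib

section
/- (Uniqueness of the Hukuhara–Turrittin invariants modulo ℤ·dw/w) Let K ≥ 1, let ν_1,…,ν_s and μ_1,…,μ_t be polar forms in ℂ·dw/w^K + ⋯ + ℂ·dw/w such that the ν_i are pairwise distinct modulo ℤ·dw/w and the μ_j are pairwise distinct modulo ℤ·dw/w, and let r_1,…,r_s and t_1,…,t_t be positive integers. If there is a ℂ[[w]]-linear map between ⊕_{i=1}^{s} V(ν_i,r_i) and ⊕_{j=1}^{t} V(μ_j,t_j) compatible with the connections which becomes an isomorphism after inverting w (equivalently, the two modules become isomorphic as modules with connection over the Laurent series field ℂ((w))), then s = t and there is a bijection σ of {1,…,s} such that r_i = t_{σ(i)} and ν_i ≡ μ_{σ(i)} (mod ℤ·dw/w) for all i. -/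
set_option maxHeartbeats 1000000
set_option synthInstance.maxHeartbeats 400000


noncomputable section

/-- Formal derivative of a power series over `ℂ`. -/
def psDeriv (f : PowerSeries ℂ) : PowerSeries ℂ :=
  PowerSeries.mk fun n => ((n : ℂ) + 1) * PowerSeries.coeff (n + 1) f

/-- The connection of `V(ν, r)`, where the polar form
`ν = (c_K w^{-K} + ⋯ + c_1 w^{-1})·dw` is encoded by the power series
`p = w^K·ν/dw = c_K + c_{K-1}·w + ⋯ + c_1·w^{K-1}` (of degree `< K`), written
in the trivialization by the generator `dw/w^K`; it sends `a·e_j` to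
`(w^K·a')·e_j + p·a·e_j + w^{K-1}·a·e_{j-1}` (with `e_0 = 0`). -/
def vD (K : ℕ) (p : PowerSeries ℂ) (r : ℕ)
    (f : Fin r → PowerSeries ℂ) : Fin r → PowerSeries ℂ := fun i =>
  (PowerSeries.X : PowerSeries ℂ) ^ K * psDeriv (f i) + p * f i +
    (PowerSeries.X : PowerSeries ℂ) ^ (K - 1) *
      (if h : (i : ℕ) + 1 < r then f ⟨(i : ℕ) + 1, h⟩ else 0)

/-- Congruence of (encoded) polar forms modulo `ℤ·dw/w`: the polar form encoded by
`p = w^K·ν/dw` is congruent to the one encoded by `q` iff `p - q = n·w^{K-1}`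
for some integer `n` (note `w^K·(dw/w)/dw = w^{K-1}`). -/
def CongModZ (K : ℕ) (p q : PowerSeries ℂ) : Prop :=
  ∃ n : ℤ, p - q = PowerSeries.C (n : ℂ) * (PowerSeries.X : PowerSeries ℂ) ^ (K - 1)

open PowerSeries

lemma psDeriv_coeff (f : ℂ⟦X⟧) (n : ℕ) :
    coeff n (psDeriv f) = ((n : ℂ) + 1) * coeff (n + 1) f :=
  coeff_mk _ _

lemma psDeriv_zero : psDeriv 0 = 0 := by
  ext n; simp [psDeriv]

lemma psDeriv_one : psDeriv 1 = 0 := by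
  ext n; simp [psDeriv, coeff_one]

lemma block_cong (K : ℕ) (hK : 1 ≤ K) (p q : ℂ⟦X⟧)
    (hp : ∀ k, K ≤ k → coeff k p = 0) (hq : ∀ k, K ≤ k → coeff k q = 0)
    (a b : ℕ) (φ : (Fin a → ℂ⟦X⟧) →ₗ[ℂ⟦X⟧] (Fin b → ℂ⟦X⟧))
    (hcom : ∀ v, φ (vD K p a v) = vD K q b (φ v))
    (hne : φ ≠ 0) : CongModZ K p q := by
  classical
  set M : Fin b → Fin a → ℂ⟦X⟧ := fun j i => φ (Pi.single i 1) j with hMdef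
  -- the single-vector computation of vD
  have hvD : ∀ i : Fin a, vD K p a (Pi.single i (1 : ℂ⟦X⟧)) =
      p • (Pi.single i 1 : Fin a → ℂ⟦X⟧) + ((X : ℂ⟦X⟧) ^ (K - 1)) •
        (if _ : 0 < (i : ℕ) then
          (Pi.single (⟨(i : ℕ) - 1, by omega⟩ : Fin a) 1 : Fin a → ℂ⟦X⟧) else 0) := by
    intro i
    funext i'
    simp only [vD, Pi.add_apply, Pi.smul_apply, smul_eq_mul]
    have hders : psDeriv ((Pi.single i 1 : Fin a → ℂ⟦X⟧) i') = 0 := by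
      rcases eq_or_ne i' i with h | h
      · subst h; rw [Pi.single_eq_same]; exact psDeriv_one
      · rw [Pi.single_eq_of_ne h]; exact psDeriv_zero
    rw [hders, mul_zero, zero_add]
    congr 1
    congr 1
    -- shift-term equality
    by_cases h1 : (i' : ℕ) + 1 < a
    · rw [dif_pos h1]
      by_cases h2 : 0 < (i : ℕ)
      · rw [dif_pos h2]
        simp only [Pi.single_apply, Fin.ext_iff]
        split_ifs <;> simp_all <;> omega
      · rw [dif_neg h2]
        have : (⟨(i' : ℕ) + 1, h1⟩ : Fin a) ≠ i := by
          intro h; apply h2; rw [← h]; simp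
        rw [Pi.single_eq_of_ne this]; rfl
    · rw [dif_neg h1]
      by_cases h2 : 0 < (i : ℕ)
      · rw [dif_pos h2]
        have : i' ≠ (⟨(i : ℕ) - 1, by omega⟩ : Fin a) := by
          intro h
          apply h1
          have := congrArg Fin.val h
          simp at this
          omega
        rw [Pi.single_eq_of_ne this]
      · rw [dif_neg h2]; rfl
  -- the entrywise series equation
  have hE : ∀ (j : Fin b) (i : Fin a),
      (X : ℂ⟦X⟧) ^ K * psDeriv (M j i) + (q - p) * M j i =
        (X : ℂ⟦X⟧) ^ (K - 1) *
          ((if _ : 0 < (i : ℕ) then M j ⟨(i : ℕ) - 1, by omega⟩ else 0)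
            - (if h : (j : ℕ) + 1 < b then M ⟨(j : ℕ) + 1, h⟩ i else 0)) := by
    intro j i
    have h1 := congrFun (hcom (Pi.single i 1)) j
    rw [hvD i, map_add, map_smul, map_smul] at h1
    simp only [vD, Pi.add_apply, Pi.smul_apply, smul_eq_mul] at h1
    by_cases h2 : 0 < (i : ℕ)
    · rw [dif_pos h2] at h1
      rw [dif_pos h2]
      simp only [hMdef]
      linear_combination -h1
    · rw [dif_neg h2] at h1
      rw [dif_neg h2]
      simp only [map_zero, Pi.zero_apply, mul_zero, add_zero] at h1
      simp only [hMdef]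
      linear_combination -h1
  set d : ℕ → ℂ := fun k => coeff k (q - p) with hd
  set Cc : ℕ → Fin b → Fin a → ℂ := fun k j i => coeff k (M j i) with hCc
  have dK : ∀ k, K ≤ k → d k = 0 := by
    intro k hk
    simp only [hd, map_sub, hq k hk, hp k hk, sub_zero]
  have Ecoeff : ∀ (n : ℕ) (j : Fin b) (i : Fin a),
      (if K ≤ n then (((n - K : ℕ) : ℂ) + 1) * Cc (n - K + 1) j i else 0)
        + ∑ k ∈ Finset.range (n + 1), d k * Cc (n - k) j i
      = if K - 1 ≤ n then
          ((if _ : 0 < (i : ℕ) then Cc (n - (K - 1)) j ⟨(i : ℕ) - 1, by omega⟩ else 0)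
            - (if h : (j : ℕ) + 1 < b then Cc (n - (K - 1)) ⟨(j : ℕ) + 1, h⟩ i else 0))
        else 0 := by
    intro n j i
    have h := congrArg (coeff n) (hE j i)
    rw [map_add] at h
    have e1 : coeff n ((X : ℂ⟦X⟧) ^ K * psDeriv (M j i)) =
        if K ≤ n then (((n - K : ℕ) : ℂ) + 1) * Cc (n - K + 1) j i else 0 := by
      rw [mul_comm, coeff_mul_X_pow']
      split_ifs with hKn
      · rw [psDeriv_coeff]
      · rfl
    have e2 : coeff n ((q - p) * M j i) =
        ∑ k ∈ Finset.range (n + 1), d k * Cc (n - k) j i := by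
      rw [coeff_mul, Finset.Nat.sum_antidiagonal_eq_sum_range_succ_mk]
    have e3 : coeff n ((X : ℂ⟦X⟧) ^ (K - 1) *
        ((if _ : 0 < (i : ℕ) then M j ⟨(i : ℕ) - 1, by omega⟩ else 0)
          - (if h : (j : ℕ) + 1 < b then M ⟨(j : ℕ) + 1, h⟩ i else 0))) =
        if K - 1 ≤ n then
          ((if _ : 0 < (i : ℕ) then Cc (n - (K - 1)) j ⟨(i : ℕ) - 1, by omega⟩ else 0)
            - (if h : (j : ℕ) + 1 < b then Cc (n - (K - 1)) ⟨(j : ℕ) + 1, h⟩ i else 0)) else 0 := by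
      rw [mul_comm, coeff_mul_X_pow']
      split_ifs with h1 h2 h2 h3 h3 <;>
        simp_all [map_sub, apply_dite (coeff (n - (K - 1))), hCc]
    rw [e1, e2, e3] at h
    exact h
  have hcol : ∀ (v : Fin a → ℂ⟦X⟧) (j : Fin b), φ v j = ∑ i, v i * M j i := by
    intro v j
    have hv : v = ∑ i : Fin a, v i • (Pi.single i 1 : Fin a → ℂ⟦X⟧) := by
      funext k
      simp [Finset.sum_apply, Pi.single_apply]
    conv_lhs => rw [hv, map_sum]
    simp [Finset.sum_apply, hMdef, smul_eq_mul]
  have hexM : ∃ k : ℕ, ∃ j i, Cc k j i ≠ 0 := by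
    by_contra h
    push_neg at h
    apply hne
    apply LinearMap.ext
    intro v
    funext j
    have hM0 : ∀ (j : Fin b) (i : Fin a), M j i = 0 := by
      intro j i
      apply PowerSeries.ext
      intro k
      simpa [hCc] using h k j i
    simp [hcol, hM0]
  set m : ℕ := Nat.find hexM with hm
  have hbelow : ∀ k, k < m → ∀ j i, Cc k j i = 0 := by
    intro k hk j i
    by_contra h
    exact (Nat.find_min hexM hk) ⟨j, i, h⟩
  obtain ⟨j0, i0, hj0⟩ := Nat.find_spec hexM
  -- Claim 1: low coefficients of q - p vanish
  have dzero : ∀ l, l + 1 < K → d l = 0 := by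
    intro l
    induction l using Nat.strong_induction_on with
    | _ l ih =>
      intro hl
      have hEc := Ecoeff (m + l) j0 i0
      have t1 : (if K ≤ m + l then (((m + l - K : ℕ) : ℂ) + 1) * Cc (m + l - K + 1) j0 i0
          else 0) = 0 := by
        split_ifs with h
        · rw [hbelow _ (by omega) j0 i0, mul_zero]
        · rfl
      have t2 : (∑ k ∈ Finset.range (m + l + 1), d k * Cc (m + l - k) j0 i0)
          = d l * Cc m j0 i0 := by
        rw [Finset.sum_eq_single l]
        · have : m + l - l = m := by omega
          rw [this]
        · intro k hk hkl
          have hk' := Finset.mem_range.mp hk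
          rcases lt_or_gt_of_ne hkl with h | h
          · rw [ih k h (by omega), zero_mul]
          · rw [hbelow (m + l - k) (by omega) j0 i0, mul_zero]
        · intro h
          exact absurd (Finset.mem_range.mpr (by omega)) h
      have t3 : (if K - 1 ≤ m + l then
          ((if _ : 0 < (i0 : ℕ) then Cc (m + l - (K - 1)) j0 ⟨(i0 : ℕ) - 1, by omega⟩ else 0)
            - (if h : (j0 : ℕ) + 1 < b then Cc (m + l - (K - 1)) ⟨(j0 : ℕ) + 1, h⟩ i0 else 0))
          else 0) = 0 := by
        split_ifs with h h1 h2 h2 <;>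
          first
          | rfl
          | (have hb3 : ∀ (j' : Fin b) (i' : Fin a), Cc (m + l - (K - 1)) j' i' = 0 :=
              fun j' i' => hbelow _ (by omega) j' i'
             simp [hb3])
      rw [t1, t2, t3, zero_add] at hEc
      rcases mul_eq_zero.mp hEc with h | h
      · exact h
      · exact absurd h hj0
  -- Claim 2: the key recursion at order m + (K-1)
  have cEq : ∀ (j : Fin b) (i : Fin a),
      ((m : ℂ) + d (K - 1)) * Cc m j i =
        (if _ : 0 < (i : ℕ) then Cc m j ⟨(i : ℕ) - 1, by omega⟩ else 0)
          - (if h : (j : ℕ) + 1 < b then Cc m ⟨(j : ℕ) + 1, h⟩ i else 0) := by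
    intro j i
    have hEc := Ecoeff (m + (K - 1)) j i
    have t1 : (if K ≤ m + (K - 1) then
        (((m + (K - 1) - K : ℕ) : ℂ) + 1) * Cc (m + (K - 1) - K + 1) j i else 0)
        = (m : ℂ) * Cc m j i := by
      rcases Nat.eq_zero_or_pos m with hm0 | hm0
      · rw [if_neg (by omega)]
        rw [hm0]
        simp
      · rw [if_pos (by omega)]
        have h1 : m + (K - 1) - K + 1 = m := by omega
        have h2 : (((m + (K - 1) - K : ℕ) : ℂ) + 1) = (m : ℂ) := by
          have h3 : m + (K - 1) - K = m - 1 := by omega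
          rw [h3, Nat.cast_sub hm0]
          push_cast
          ring
        rw [h1, h2]
    have t2 : (∑ k ∈ Finset.range (m + (K - 1) + 1), d k * Cc (m + (K - 1) - k) j i)
        = d (K - 1) * Cc m j i := by
      rw [Finset.sum_eq_single (K - 1)]
      · have : m + (K - 1) - (K - 1) = m := by omega
        rw [this]
      · intro k hk hkl
        have hk' := Finset.mem_range.mp hk
        rcases lt_or_gt_of_ne hkl with h | h
        · rw [dzero k (by omega), zero_mul]
        · rw [dK k (by omega), zero_mul]
      · intro h
        exact absurd (Finset.mem_range.mpr (by omega)) h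
    have hle : K - 1 ≤ m + (K - 1) := by omega
    have hidx : m + (K - 1) - (K - 1) = m := by omega
    rw [t1, t2, if_pos hle, hidx] at hEc
    rw [add_mul]
    exact hEc
  -- Claim 3: the eigenvalue must vanish
  have hc : (m : ℂ) + d (K - 1) = 0 := by
    by_contra hc
    have key : ∀ n : ℕ, ∀ (j : Fin b) (i : Fin a),
        (i : ℕ) + (b - 1 - (j : ℕ)) < n → Cc m j i = 0 := by
      intro n
      induction n with
      | zero => intro j i h; omega
      | succ n ihn =>
        intro j i hlt
        have hEq := cEq j i
        have hL : (if _ : 0 < (i : ℕ) then Cc m j ⟨(i : ℕ) - 1, by omega⟩ else 0) = 0 := by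
          split_ifs with h
          · exact ihn j ⟨(i : ℕ) - 1, by omega⟩ (by simp; omega)
          · rfl
        have hU : (if h : (j : ℕ) + 1 < b then Cc m ⟨(j : ℕ) + 1, h⟩ i else 0) = 0 := by
          split_ifs with h
          · exact ihn ⟨(j : ℕ) + 1, h⟩ i (by simp; omega)
          · rfl
        rw [hL, hU, sub_zero] at hEq
        rcases mul_eq_zero.mp hEq with h | h
        · exact absurd h hc
        · exact h
    exact hj0 (key ((i0 : ℕ) + (b - 1 - (j0 : ℕ)) + 1) j0 i0 (by omega))
  -- Conclusion
  refine ⟨(m : ℤ), ?_⟩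
  ext k
  rw [map_sub, coeff_C_mul, coeff_X_pow]
  have hdk : coeff k p - coeff k q = - d k := by
    simp only [hd, map_sub]
    ring
  rcases lt_trichotomy k (K - 1) with h | h | h
  · rw [if_neg (by omega), hdk, dzero k (by omega)]
    simp
  · rw [if_pos h, hdk, h]
    have : d (K - 1) = -(m : ℂ) := by linear_combination hc
    rw [this]
    push_cast
    ring
  · rw [if_neg (by omega), hp k (by omega), hq k (by omega)]
    simp

lemma vD_zero (K : ℕ) (p : ℂ⟦X⟧) (r : ℕ) : vD K p r 0 = 0 := by
  funext i
  simp [vD, psDeriv_zero]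

lemma CongModZ.symm' {K : ℕ} {p q : ℂ⟦X⟧} (h : CongModZ K p q) : CongModZ K q p := by
  obtain ⟨n, hn⟩ := h
  refine ⟨-n, ?_⟩
  rw [Int.cast_neg, map_neg]
  linear_combination -hn

lemma CongModZ.trans' {K : ℕ} {p q r : ℂ⟦X⟧} (h1 : CongModZ K p q) (h2 : CongModZ K q r) :
    CongModZ K p r := by
  obtain ⟨n, hn⟩ := h1
  obtain ⟨m, hm⟩ := h2
  refine ⟨n + m, ?_⟩
  rw [Int.cast_add, map_add]
  linear_combination hn + hm


/-- The rank lemma: an `ℂ⟦X⟧`-linear map between finite free modules which is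
injective and surjective up to powers of `X` forces equal ranks. -/
lemma rank_eq_aux (a b : ℕ) (ψ : (Fin a → ℂ⟦X⟧) →ₗ[ℂ⟦X⟧] (Fin b → ℂ⟦X⟧))
    (hinj : ∀ v, ψ v = 0 → v = 0)
    (hsur : ∀ w : Fin b → ℂ⟦X⟧, ∃ (n : ℕ) (v : Fin a → ℂ⟦X⟧),
      ψ v = ((X : ℂ⟦X⟧) ^ n) • w) :
    a = b := by
  classical
  set R := ℂ⟦X⟧
  let F := FractionRing R
  set M : Matrix (Fin b) (Fin a) R := LinearMap.toMatrix' ψ with hM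
  have hψ : ∀ v, ψ v = M.mulVec v := by
    intro v
    conv_lhs => rw [← Matrix.toLin'_toMatrix' ψ]
    rw [Matrix.toLin'_apply]
  let alg : R →+* F := algebraMap R F
  have halg : Function.Injective alg := IsFractionRing.injective R F
  set MF : Matrix (Fin b) (Fin a) F := M.map alg with hMF
  let ψF : (Fin a → F) →ₗ[F] (Fin b → F) := Matrix.toLin' MF
  have hψF : ∀ v, ψF v = MF.mulVec v := fun v => Matrix.toLin'_apply MF v
  have clear : ∀ {n : ℕ} (k : Fin n → F), ∃ (c : nonZeroDivisors R) (u : Fin n → R),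
      ∀ i, alg (u i) = (c : R) • k i := by
    intro n k
    obtain ⟨c, hc⟩ := IsLocalization.exist_integer_multiples (nonZeroDivisors R)
      Finset.univ k
    choose u hu using fun i => hc i (Finset.mem_univ i)
    exact ⟨c, u, hu⟩
  have halgc : ∀ c : nonZeroDivisors R, alg (c : R) ≠ 0 := by
    intro c hc0
    have : (c : R) ≠ 0 := mem_nonZeroDivisors_iff_ne_zero.mp c.2
    exact this (halg (by simpa using hc0))
  have hinjF : Function.Injective ψF := by
    rw [injective_iff_map_eq_zero]
    intro k hk
    obtain ⟨c, u, hu⟩ := clear k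
    have hmv : MF.mulVec k = 0 := by rw [← hψF]; exact hk
    have h1 : M.mulVec u = 0 := by
      funext j
      apply halg
      have h2 : alg (M.mulVec u j) = MF.mulVec (alg ∘ u) j :=
        RingHom.map_mulVec alg M u j
      have h3 : (alg ∘ u) = fun i => alg (c : R) * k i := by
        funext i
        rw [Function.comp_apply, hu i, Algebra.smul_def]
      rw [h2, h3]
      have h4 : (fun i => alg (c : R) * k i) = alg (c : R) • k := by
        funext i; simp [Pi.smul_apply, smul_eq_mul]
      rw [h4, Matrix.mulVec_smul, hmv]
      simp
    have hu0 : u = 0 := hinj u (by rw [hψ]; exact h1)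
    funext i
    have : alg (u i) = (c : R) • k i := hu i
    rw [hu0] at this
    simp only [Pi.zero_apply, map_zero] at this
    have h5 : alg (c : R) * k i = 0 := by
      rw [← Algebra.smul_def]; exact this.symm
    rcases mul_eq_zero.mp h5 with h | h
    · exact absurd h (halgc c)
    · simpa using h
  have hsurF : Function.Surjective ψF := by
    intro k
    obtain ⟨c, w, hw⟩ := clear k
    obtain ⟨n, v, hv⟩ := hsur w
    set α : F := alg ((X : R) ^ n * (c : R)) with hα
    have hα0 : α ≠ 0 := by
      intro h
      have : ((X : R) ^ n * (c : R)) = 0 := halg (by simpa [hα] using h)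
      rcases mul_eq_zero.mp this with h | h
      · exact pow_ne_zero n PowerSeries.X_ne_zero h
      · exact mem_nonZeroDivisors_iff_ne_zero.mp c.2 h
    refine ⟨α⁻¹ • (alg ∘ v), ?_⟩
    rw [map_smul]
    have h1 : ψF (alg ∘ v) = α • k := by
      funext j
      rw [hψF]
      have h2 : MF.mulVec (alg ∘ v) j = alg (M.mulVec v j) :=
        (RingHom.map_mulVec alg M v j).symm
      rw [h2, ← hψ, hv]
      have : ((X : R) ^ n • w) j = (X : R) ^ n * w j := rfl
      rw [this, map_mul]
      rw [Pi.smul_apply, hα, map_mul, smul_eq_mul]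
      have h3 : alg (w j) = alg (c : R) * k j := by
        rw [hw j, Algebra.smul_def]
      rw [h3]; ring
    rw [h1, smul_smul, inv_mul_cancel₀ hα0, one_smul]
  have h1 : a ≤ b := by
    have := LinearMap.finrank_le_finrank_of_injective hinjF
    simpa [Module.finrank_pi] using this
  have h2 : b ≤ a := by
    have hr : LinearMap.range ψF = ⊤ := LinearMap.range_eq_top.mpr hsurF
    have := LinearMap.finrank_range_le ψF
    rw [hr, finrank_top] at this
    simpa [Module.finrank_pi] using this
  omega


/-- **Uniqueness of the Hukuhara–Turrittin invariants modulo `ℤ·dw/w`.**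
If `⊕ᵢ V(νᵢ, aᵢ)` and `⊕ⱼ V(μⱼ, bⱼ)`, with the `νᵢ` pairwise distinct mod `ℤ·dw/w`
and the `μⱼ` pairwise distinct mod `ℤ·dw/w`, admit a `ℂ⟦w⟧`-linear map compatible
with the connections which becomes an isomorphism after inverting `w`, then `s = t`
and there is a bijection `σ` with `aᵢ = b_{σ(i)}` and `νᵢ ≡ μ_{σ(i)} (mod ℤ·dw/w)`. -/
theorem hukuhara_turrittin_uniqueness (K s t : ℕ) (hK : 1 ≤ K)
    (hs : 1 ≤ s) (ht : 1 ≤ t)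
    (ν : Fin s → PowerSeries ℂ) (μ : Fin t → PowerSeries ℂ)
    (hνbd : ∀ i k, K ≤ k → PowerSeries.coeff k (ν i) = 0)
    (hμbd : ∀ j k, K ≤ k → PowerSeries.coeff k (μ j) = 0)
    (hνdist : ∀ i i', i ≠ i' → ¬ CongModZ K (ν i) (ν i'))
    (hμdist : ∀ j j', j ≠ j' → ¬ CongModZ K (μ j) (μ j'))
    (a : Fin s → ℕ) (b : Fin t → ℕ) (ha : ∀ i, 1 ≤ a i) (hb : ∀ j, 1 ≤ b j)
    (Φ : ((i : Fin s) → Fin (a i) → PowerSeries ℂ) →ₗ[PowerSeries ℂ]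
        ((j : Fin t) → Fin (b j) → PowerSeries ℂ))
    (hcompat : ∀ g, Φ (fun i => vD K (ν i) (a i) (g i)) =
      fun j => vD K (μ j) (b j) (Φ g j))
    (hker : ∀ v, Φ v = 0 → ∃ n : ℕ, ((PowerSeries.X : PowerSeries ℂ) ^ n) • v = 0)
    (hsurj : ∀ w, ∃ (n : ℕ) (v : (i : Fin s) → Fin (a i) → PowerSeries ℂ),
      Φ v = ((PowerSeries.X : PowerSeries ℂ) ^ n) • w) :
    s = t ∧ ∃ σ : Fin s ≃ Fin t, ∀ i, a i = b (σ i) ∧ CongModZ K (ν i) (μ (σ i)) := by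
  classical
  let φB : ∀ (j : Fin t) (i : Fin s), (Fin (a i) → ℂ⟦X⟧) →ₗ[ℂ⟦X⟧] (Fin (b j) → ℂ⟦X⟧) :=
    fun j i => (LinearMap.proj j).comp
      (Φ.comp (LinearMap.single ℂ⟦X⟧ (fun i' => Fin (a i') → ℂ⟦X⟧) i))
  have hφB : ∀ (j : Fin t) (i : Fin s) (v : Fin (a i) → ℂ⟦X⟧),
      φB j i v = Φ (Pi.single i v) j := fun j i v => rfl
  have hBcom : ∀ (j : Fin t) (i : Fin s) (v : Fin (a i) → ℂ⟦X⟧),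
      φB j i (vD K (ν i) (a i) v) = vD K (μ j) (b j) (φB j i v) := by
    intro j i v
    have h2 : (fun i' => vD K (ν i') (a i')
          ((Pi.single i v : (i'' : Fin s) → Fin (a i'') → ℂ⟦X⟧) i')) =
        (Pi.single i (vD K (ν i) (a i) v) : (i'' : Fin s) → Fin (a i'') → ℂ⟦X⟧) := by
      funext i'
      rcases eq_or_ne i' i with h | h
      · subst h
        rw [Pi.single_eq_same, Pi.single_eq_same]
      · rw [Pi.single_eq_of_ne h, Pi.single_eq_of_ne h, vD_zero]
    have h1 := congrFun (hcompat (Pi.single i v)) j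
    rw [h2] at h1
    rw [hφB, hφB, h1]
  have hBcong : ∀ (j : Fin t) (i : Fin s), φB j i ≠ 0 → CongModZ K (ν i) (μ j) :=
    fun j i h =>
      block_cong K hK (ν i) (μ j) (hνbd i) (hμbd j) (a i) (b j) (φB j i) (hBcom j i) h
  -- every i hits some j
  have hex1 : ∀ i : Fin s, ∃ j : Fin t, φB j i ≠ 0 := by
    intro i
    by_contra h
    push_neg at h
    have h1 : Φ (Pi.single i (fun _ => 1)) = 0 := by
      funext j
      have h2 : φB j i (fun _ => 1) = 0 := by rw [h j]; rfl
      rw [hφB] at h2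
      exact h2
    obtain ⟨n, hn⟩ := hker _ h1
    have h3 := congrFun (congrFun hn i) ⟨0, ha i⟩
    simp only [Pi.smul_apply, smul_eq_mul, Pi.single_eq_same, Pi.zero_apply] at h3
    rw [mul_one] at h3
    exact pow_ne_zero n X_ne_zero h3
  choose σf hσf using hex1
  have hcong : ∀ i, CongModZ K (ν i) (μ (σf i)) := fun i => hBcong _ _ (hσf i)
  have huniq : ∀ (i : Fin s) (j : Fin t), CongModZ K (ν i) (μ j) → j = σf i := by
    intro i j h
    by_contra hne
    exact hμdist j (σf i) hne (CongModZ.trans' (CongModZ.symm' h) (hcong i))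
  have hinjσ : Function.Injective σf := by
    intro i1 i2 h
    by_contra hne
    have h2 := CongModZ.symm' (hcong i2)
    rw [← h] at h2
    exact hνdist i1 i2 hne (CongModZ.trans' (hcong i1) h2)
  have hsurjσ : Function.Surjective σf := by
    intro j
    obtain ⟨n, v, hv⟩ := hsurj (Pi.single j (fun _ => 1))
    by_contra h
    push_neg at h
    have hz : ∀ i, φB j i = 0 := by
      intro i
      by_contra hnz
      exact h i (huniq i j (hBcong j i hnz)).symm
    have h1 : Φ v j = 0 := by
      conv_lhs => rw [← Finset.univ_sum_single v, map_sum]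
      rw [Finset.sum_apply]
      apply Finset.sum_eq_zero
      intro i _
      rw [← hφB, hz i]
      rfl
    have h2 := congrFun (congrFun hv j) ⟨0, hb j⟩
    rw [h1] at h2
    simp only [Pi.smul_apply, smul_eq_mul, Pi.single_eq_same, Pi.zero_apply] at h2
    rw [mul_one] at h2
    exact pow_ne_zero n X_ne_zero h2.symm
  -- ranks agree
  have hrank : ∀ i : Fin s, a i = b (σf i) := by
    intro i
    apply rank_eq_aux (a i) (b (σf i)) (φB (σf i) i)
    · -- injectivity
      intro v hv0
      have h1 : Φ (Pi.single i v) = 0 := by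
        funext j
        rcases eq_or_ne j (σf i) with h | h
        · rw [← hφB, h, hv0]
          rfl
        · have hz : φB j i = 0 := by
            by_contra hnz
            exact h (huniq i j (hBcong j i hnz))
          rw [← hφB, hz]
          rfl
      obtain ⟨n, hn⟩ := hker _ h1
      funext k
      have h3 := congrFun (congrFun hn i) k
      simp only [Pi.smul_apply, smul_eq_mul, Pi.single_eq_same, Pi.zero_apply] at h3 ⊢
      rcases mul_eq_zero.mp h3 with h | h
      · exact absurd h (pow_ne_zero n X_ne_zero)
      · exact h
    · -- surjectivity up to powers of X
      intro w
      obtain ⟨n, v, hv⟩ := hsurj (Pi.single (σf i) w)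
      refine ⟨n, v i, ?_⟩
      have h1 := congrFun hv (σf i)
      have h2 : Φ v (σf i) = φB (σf i) i (v i) := by
        conv_lhs => rw [← Finset.univ_sum_single v, map_sum]
        rw [Finset.sum_apply, Finset.sum_eq_single i]
        · exact (hφB _ _ _).symm ▸ rfl
        · intro i' _ hne
          have hz : φB (σf i) i' = 0 := by
            by_contra hnz
            exact hne (hinjσ (huniq i' (σf i) (hBcong _ _ hnz))).symm
          rw [← hφB, hz]
          rfl
        · intro h
          exact absurd (Finset.mem_univ i) h
      rw [← h2, h1, Pi.smul_apply, Pi.single_eq_same]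
  have hst : s = t := by
    have := Fintype.card_congr (Equiv.ofBijective σf ⟨hinjσ, hsurjσ⟩)
    simpa using this
  exact ⟨hst, Equiv.ofBijective σf ⟨hinjσ, hsurjσ⟩, fun i => ⟨hrank i, hcong i⟩⟩
end
end

section
/- Let m ≥ 1, let p ∈ ℂ[X] be a nonzero polynomial of degree ≤ m−1, and let c ∈ ℂ[[z]] be a nonzero formal power series of order k (i.e. c = c_k z^k + (higher order terms) with c_k ≠ 0). If the identity z^m·(dc/dz) = c·p(z) holds in ℂ[[z]], then p = k·X^{m−1} (so in particular k is determined as the unique nonzero coefficient of p), and moreover c = c_k·z^k is a monomial. -/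
noncomputable section

lemma lhs_coeff (c : PowerSeries ℂ) (m n : ℕ) :
    PowerSeries.coeff n ((PowerSeries.X : PowerSeries ℂ) ^ m * psDeriv c) =
      if m ≤ n then ((n - m + 1 : ℕ) : ℂ) * PowerSeries.coeff (n - m + 1) c else 0 := by
  rw [PowerSeries.coeff_X_pow_mul']
  split_ifs with h
  · simp [psDeriv, PowerSeries.coeff_mk]
  · rfl

lemma rhs_coeff_low (c : PowerSeries ℂ) (p : Polynomial ℂ) (k : ℕ)
    (hlow : ∀ j < k, PowerSeries.coeff j c = 0) (v : ℕ)
    (hv : ∀ j < v, p.coeff j = 0) :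
    PowerSeries.coeff (k + v) (c * (p : PowerSeries ℂ)) =
      PowerSeries.coeff k c * p.coeff v := by
  rw [PowerSeries.coeff_mul]
  rw [Finset.sum_eq_single (k, v)]
  · simp [Polynomial.coeff_coe]
  · rintro ⟨i, j⟩ h1 h2
    have h1 : i + j = k + v := Finset.HasAntidiagonal.mem_antidiagonal.mp h1
    rcases lt_trichotomy i k with hi | hi | hi
    · rw [hlow i hi, zero_mul]
    · exfalso; apply h2; subst hi
      have : j = v := by omega
      rw [this]
    · have hj : j < v := by omega
      simp only
      rw [Polynomial.coeff_coe, hv j hj, mul_zero]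
  · intro h; simp [Finset.mem_antidiagonal] at h

/-- Let `p ∈ ℂ[X]` be a nonzero polynomial of degree `≤ m - 1` and let `c ∈ ℂ⟦z⟧`
be nonzero of order `k`. If `z^m·(dc/dz) = c·p(z)` in `ℂ⟦z⟧` then
`p = k·X^{m-1}` and `c = c_k·z^k` is a monomial. -/
theorem polar_rank_one_rigidity (m k : ℕ) (hm : 1 ≤ m)
    (p : Polynomial ℂ) (hp : p ≠ 0) (hdeg : p.natDegree ≤ m - 1)
    (c : PowerSeries ℂ)
    (hck : PowerSeries.coeff k c ≠ 0)
    (hlow : ∀ j < k, PowerSeries.coeff j c = 0)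
    (heq : (PowerSeries.X : PowerSeries ℂ) ^ m * psDeriv c = c * (p : PowerSeries ℂ)) :
    p = Polynomial.C (k : ℂ) * Polynomial.X ^ (m - 1) ∧
    c = (PowerSeries.monomial k) (PowerSeries.coeff k c) := by
  set v := p.natTrailingDegree with hvdef
  have hvne : p.coeff v ≠ 0 := Polynomial.trailingCoeff_nonzero_iff_nonzero.mpr hp
  have hvlow : ∀ j < v, p.coeff j = 0 := fun j hj =>
    Polynomial.coeff_eq_zero_of_lt_natTrailingDegree hj
  have hvle : v ≤ m - 1 := le_trans (Polynomial.natTrailingDegree_le_natDegree p) hdeg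
  have key : ∀ n, (if m ≤ n then ((n - m + 1 : ℕ) : ℂ) * PowerSeries.coeff (n - m + 1) c else 0)
      = PowerSeries.coeff n (c * (p : PowerSeries ℂ)) := by
    intro n
    rw [← lhs_coeff, heq]
  have hkv := key (k + v)
  rw [rhs_coeff_low c p k hlow v hvlow] at hkv
  -- first: k ≥ 1
  have hk1 : 1 ≤ k := by
    by_contra h
    have hk0 : k = 0 := by omega
    rw [if_neg (by omega)] at hkv
    exact (mul_ne_zero hck hvne) hkv.symm
  -- v = m - 1
  have hveq : v = m - 1 := by
    by_contra h
    have hvlt : v < m - 1 := lt_of_le_of_ne hvle h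
    have : (if m ≤ k + v then ((k + v - m + 1 : ℕ) : ℂ) * PowerSeries.coeff (k + v - m + 1) c else 0) = 0 := by
      split_ifs with hle
      · rw [hlow (k + v - m + 1) (by omega), mul_zero]
      · rfl
    rw [this] at hkv
    exact (mul_ne_zero hck hvne) hkv.symm
  set a := p.coeff (m - 1) with hadef
  have hane : a ≠ 0 := by rw [hadef, ← hveq]; exact hvne
  have hpform : p = Polynomial.C a * Polynomial.X ^ (m - 1) := by
    ext i
    rw [Polynomial.coeff_C_mul, Polynomial.coeff_X_pow]
    rcases lt_trichotomy i (m - 1) with hi | hi | hi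
    · rw [if_neg hi.ne, mul_zero, hvlow i (hveq ▸ hi)]
    · rw [hi, if_pos rfl, mul_one]
    · rw [if_neg hi.ne', mul_zero,
        Polynomial.coeff_eq_zero_of_natDegree_lt (lt_of_le_of_lt hdeg hi)]
  -- general coefficient identity with p in monomial form
  have key2 : ∀ d : ℕ, ((d : ℂ)) * PowerSeries.coeff d c = a * PowerSeries.coeff d c := by
    intro d
    rcases Nat.eq_zero_or_pos d with hd | hd
    · subst hd
      simp [hlow 0 hk1]
    · have h := key (d + (m - 1))
      rw [if_pos (by omega)] at h
      have hidx : d + (m - 1) - m + 1 = d := by omega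
      rw [hidx] at h
      have hr : PowerSeries.coeff (d + (m - 1)) (c * (p : PowerSeries ℂ))
          = a * PowerSeries.coeff d c := by
        rw [hpform]
        push_cast
        rw [← mul_assoc, PowerSeries.coeff_mul_X_pow, mul_comm c, PowerSeries.coeff_C_mul]
      rw [hr] at h
      exact h
  have hak : a = (k : ℂ) := by
    have h := key2 k
    exact (mul_right_cancel₀ hck h).symm
  constructor
  · rw [hpform, hak]
  · ext n
    rw [PowerSeries.coeff_monomial]
    split_ifs with hn
    · rw [hn]
    · have h := key2 n
      rw [hak] at h
      have : ((n : ℂ) - (k : ℂ)) * PowerSeries.coeff n c = 0 := by ring_nf; linear_combination h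
      rcases mul_eq_zero.mp this with h0 | h0
      · exact absurd (Nat.cast_injective (sub_eq_zero.mp h0)) hn
      · exact h0
end
end

section
/- Let N ≥ m ≥ 1 and let p ∈ ℂ[X] be a nonzero polynomial of degree ≤ m−1 whose lowest nonzero coefficient sits in degree m−n, where 1 ≤ n ≤ m. Let c ∈ ℂ[[X]] satisfy the congruence X^m·(dc/dX) ≡ c·p (mod X^N). If c ≢ 0 (mod X^{N−m+n}), then n = 1 (so p = α·X^{m−1} for a single nonzero α ∈ ℂ) and α equals the order of c (a nonnegative integer). In particular, if m ≥ 2 and the constant term p(0) ≠ 0, then necessarily c ≡ 0 (mod X^N). -/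
noncomputable section

/-- Let `N ≥ m ≥ 1` and let `p ∈ ℂ[X]` be nonzero of degree `≤ m - 1` whose lowest
nonzero coefficient sits in degree `m - n` (with `1 ≤ n ≤ m`). Suppose
`c ∈ ℂ⟦X⟧` satisfies `X^m·(dc/dX) ≡ c·p (mod X^N)`. If `c ≢ 0 (mod X^{N-m+n})`,
then `n = 1` (so `p = α·X^{m-1}` with `α ≠ 0`) and `α = p.coeff (m-1)` equals the
order `k` of `c`, a nonnegative integer. In particular, if `m ≥ 2` and the constant
term `p(0) ≠ 0`, then necessarily `c ≡ 0 (mod X^N)`. -/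
theorem truncated_polar_rigidity (N m n : ℕ) (hm : 1 ≤ m) (hN : m ≤ N)
    (hn1 : 1 ≤ n) (hnm : n ≤ m)
    (p : Polynomial ℂ) (hp : p ≠ 0) (hdeg : p.natDegree ≤ m - 1)
    (hlow : p.coeff (m - n) ≠ 0) (hlow' : ∀ j < m - n, p.coeff j = 0)
    (c : PowerSeries ℂ)
    (hcong : ((PowerSeries.X : PowerSeries ℂ) ^ N) ∣
      ((PowerSeries.X : PowerSeries ℂ) ^ m * psDeriv c - c * (p : PowerSeries ℂ))) :
    (¬ ((PowerSeries.X : PowerSeries ℂ) ^ (N - m + n) ∣ c) →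
      n = 1 ∧ ∃ k : ℕ, (∀ j < k, PowerSeries.coeff j c = 0) ∧
        PowerSeries.coeff k c ≠ 0 ∧ p.coeff (m - 1) = (k : ℂ)) ∧
    (2 ≤ m → p.coeff 0 ≠ 0 → (PowerSeries.X : PowerSeries ℂ) ^ N ∣ c) := by
  have key : ∀ i < N, (PowerSeries.coeff i ((PowerSeries.X : PowerSeries ℂ) ^ m * psDeriv c)) =
      PowerSeries.coeff i (c * (p : PowerSeries ℂ)) := by
    intro i hi
    have h := (PowerSeries.X_pow_dvd_iff.mp hcong) i hi
    rw [map_sub, sub_eq_zero] at h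
    exact h
  have main : ¬ ((PowerSeries.X : PowerSeries ℂ) ^ (N - m + n) ∣ c) →
      n = 1 ∧ ∃ k : ℕ, (∀ j < k, PowerSeries.coeff j c = 0) ∧
        PowerSeries.coeff k c ≠ 0 ∧ p.coeff (m - 1) = (k : ℂ) := by
    intro hnd
    have hex : ∃ j, j < N - m + n ∧ PowerSeries.coeff j c ≠ 0 := by
      by_contra h
      push_neg at h
      exact hnd (PowerSeries.X_pow_dvd_iff.mpr h)
    obtain ⟨j₀, hj₀, hj₀ne⟩ := hex
    have hc0 : ∃ j, PowerSeries.coeff j c ≠ 0 := ⟨j₀, hj₀ne⟩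
    set k := Nat.find hc0 with hkdef
    have hk : PowerSeries.coeff k c ≠ 0 := Nat.find_spec hc0
    have hkmin : ∀ j < k, PowerSeries.coeff j c = 0 := by
      intro j hj
      by_contra hc
      exact absurd (Nat.find_min hc0 hj) (by simp [hc])
    have hkb : k < N - m + n := lt_of_le_of_lt (Nat.find_min' hc0 hj₀ne) hj₀
    clear_value k
    have hi : k + (m - n) < N := by omega
    have hrhs : PowerSeries.coeff (k + (m - n)) (c * (p : PowerSeries ℂ)) =
        PowerSeries.coeff k c * p.coeff (m - n) := by
      rw [PowerSeries.coeff_mul]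
      rw [Finset.sum_eq_single (k, m - n)]
      · rw [Polynomial.coeff_coe]
      · rintro ⟨a, b⟩ hab hne
        rw [Finset.HasAntidiagonal.mem_antidiagonal] at hab
        rcases lt_trichotomy a k with h | h | h
        · rw [hkmin a h, zero_mul]
        · exact absurd (by simp [Prod.ext_iff]; omega) hne
        · have hb : b < m - n := by omega
          rw [Polynomial.coeff_coe, hlow' b hb, mul_zero]
      · intro h
        exact absurd (by simp : (k, m - n) ∈ Finset.HasAntidiagonal.antidiagonal (k + (m - n))) h
    have hE := key _ hi
    rw [hrhs] at hE
    have hn : n = 1 := by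
      by_contra hne1
      have hn2 : 2 ≤ n := by omega
      have hlhs : PowerSeries.coeff (k + (m - n))
          ((PowerSeries.X : PowerSeries ℂ) ^ m * psDeriv c) = 0 := by
        by_cases hkn : k < n
        · exact PowerSeries.X_pow_dvd_iff.mp (dvd_mul_right _ _) _ (by omega)
        · have hrw : k + (m - n) = (k - n) + m := by omega
          rw [hrw, PowerSeries.coeff_X_pow_mul]
          simp only [psDeriv, PowerSeries.coeff_mk]
          rw [hkmin (k - n + 1) (by omega), mul_zero]
      rw [hlhs] at hE
      rcases mul_eq_zero.mp hE.symm with h | h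
      · exact hk h
      · exact hlow h
    subst hn
    refine ⟨rfl, k, hkmin, hk, ?_⟩
    rcases Nat.eq_zero_or_pos k with hk0 | hk1
    · subst hk0
      have hlhs : PowerSeries.coeff (0 + (m - 1))
          ((PowerSeries.X : PowerSeries ℂ) ^ m * psDeriv c) = 0 :=
        PowerSeries.X_pow_dvd_iff.mp (dvd_mul_right _ _) _ (by omega)
      rw [hlhs] at hE
      rcases mul_eq_zero.mp hE.symm with h | h
      · exact absurd h hk
      · exact absurd h hlow
    · have hrw : k + (m - 1) = (k - 1) + m := by omega
      rw [hrw, PowerSeries.coeff_X_pow_mul] at hE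
      simp only [psDeriv, PowerSeries.coeff_mk] at hE
      have hk1' : k - 1 + 1 = k := by omega
      rw [hk1'] at hE
      have hcast : ((k - 1 : ℕ) + 1 : ℂ) = (k : ℂ) := by
        push_cast [Nat.cast_sub hk1]
        ring
      rw [hcast] at hE
      exact mul_left_cancel₀ hk (by rw [← hE]; ring)
  refine ⟨main, ?_⟩
  intro hm2 hp0
  have hnm' : n = m := by
    by_contra h
    exact hp0 (hlow' 0 (by omega))
  by_contra hnd
  have hnd' : ¬ ((PowerSeries.X : PowerSeries ℂ) ^ (N - m + n) ∣ c) := by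
    rw [show N - m + n = N from by omega]
    exact hnd
  obtain ⟨hn1', _⟩ := main hnd'
  omega
end
end

section
/- Let m ≥ 2 and let V be a free ℂ[[z]]-module of rank r with a connection ∇ of pole order m, encoded by D : V → V with D(a·v) = (z^m·da/dz)·v + a·D(v). The induced map D_m on V/z^mV is ℂ[z]/(z^m)-linear. Let p_j = a_{j,0} + a_{j,1}z + ⋯ + a_{j,m−1}z^{m−1} ∈ ℂ[z] for 0 ≤ j ≤ r−1 (encoding the polar forms ν_j = p_j·dz/z^m) and assume the leading coefficients a_{0,0}, a_{1,0}, …, a_{r−1,0} are pairwise distinct. Suppose V/z^mV admits a filtration V/z^mV = l_0 ⊃ l_1 ⊃ ⋯ ⊃ l_{r−1} ⊃ l_r = 0 by ℂ[z]/(z^m)-submodules with each l_j/l_{j+1} free of rank 1, D_m(l_j) ⊆ l_j for all j, and D_m acting on l_j/l_{j+1} as multiplication by p_j. Then (V,∇) ≅ V(ν_0,1) ⊕ V(ν_1,1) ⊕ ⋯ ⊕ V(ν_{r−1},1) as ℂ[[z]]-modules with connection. -/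
noncomputable section

/-- `D` is a connection of pole order `m` on the free module `Fin r → ℂ⟦z⟧`,
written in the trivialization by the generator `dz/z^m`. -/
def IsConnection (m r : ℕ)
    (D : (Fin r → PowerSeries ℂ) → (Fin r → PowerSeries ℂ)) : Prop :=
  (∀ v w, D (v + w) = D v + D w) ∧
  ∀ (a : PowerSeries ℂ) (v : Fin r → PowerSeries ℂ),
    D (a • v) = ((PowerSeries.X : PowerSeries ℂ) ^ m * psDeriv a) • v + a • D v

/-- The submodule `z^n·V ⊆ V = (Fin r → ℂ⟦z⟧)`. -/
def zPow (r n : ℕ) : Submodule (PowerSeries ℂ) (Fin r → PowerSeries ℂ) :=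
  Submodule.pi Set.univ fun _ : Fin r =>
    (Ideal.span {(PowerSeries.X : PowerSeries ℂ) ^ n} : Ideal (PowerSeries ℂ))


open PowerSeries Finset in
lemma psDeriv_eq (f : PowerSeries ℂ) : psDeriv f = f.derivativeFun := by
  ext n
  rw [psDeriv, PowerSeries.coeff_mk, show f.derivativeFun = PowerSeries.derivative ℂ f from rfl,
    PowerSeries.coeff_derivativeFun]
  push_cast
  ring

lemma psDeriv_add (f g : PowerSeries ℂ) : psDeriv (f + g) = psDeriv f + psDeriv g := by
  simp [psDeriv_eq, PowerSeries.derivativeFun_add]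

lemma psDeriv_mul (f g : PowerSeries ℂ) :
    psDeriv (f * g) = psDeriv f * g + f * psDeriv g := by
  simp only [psDeriv_eq, PowerSeries.derivativeFun_mul, smul_eq_mul]
  ring

lemma coeff_psDeriv (f : PowerSeries ℂ) (n : ℕ) :
    PowerSeries.coeff n (psDeriv f) = ((n : ℂ) + 1) * PowerSeries.coeff (n + 1) f := by
  rw [psDeriv, PowerSeries.coeff_mk]

/-- `psDeriv` as an additive homomorphism. -/
def psDerivHom : PowerSeries ℂ →+ PowerSeries ℂ := AddMonoidHom.mk' psDeriv psDeriv_add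

/-- Entrywise derivative of a matrix of power series. -/
def mDeriv {r : ℕ} (M : Matrix (Fin r) (Fin r) (PowerSeries ℂ)) :
    Matrix (Fin r) (Fin r) (PowerSeries ℂ) :=
  Matrix.of fun i j => psDeriv (M i j)

lemma mDeriv_mul {r : ℕ} (A B : Matrix (Fin r) (Fin r) (PowerSeries ℂ)) :
    mDeriv (A * B) = mDeriv A * B + A * mDeriv B := by
  refine Matrix.ext fun i j => ?_
  simp only [mDeriv, Matrix.add_apply, Matrix.mul_apply, Matrix.of_apply]
  have : psDeriv (∑ k, A i k * B k j) = ∑ k, psDeriv (A i k * B k j) :=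
    map_sum psDerivHom (fun k => A i k * B k j) _
  rw [this, ← Finset.sum_add_distrib]
  exact Finset.sum_congr rfl fun k _ => psDeriv_mul _ _

/-- The coefficient recursion producing the gauge transformation killing all
higher-order terms. -/
def kc {r : ℕ} (m : ℕ) (S : Matrix (Fin r) (Fin r) (PowerSeries ℂ)) (p : ℕ → PowerSeries ℂ)
    (n : ℕ) (i j : Fin r) : ℂ :=
  if hij : i = j then
    (if hn : n = 0 then 1 else
      (-(n : ℂ)⁻¹) * ∑ a ∈ (Finset.range n).attach,
        ∑ k, PowerSeries.coeff a.1 (S j k) * kc m S p (n - 1 - a.1) k j)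
  else
    (-(PowerSeries.constantCoeff (p i.1) - PowerSeries.constantCoeff (p j.1))⁻¹) * (
      (∑ a ∈ (Finset.range n).attach,
        PowerSeries.coeff (a.1 + 1) (p i.1 - p j.1) * kc m S p (n - (a.1 + 1)) i j)
      + (if hg : 2 ≤ m ∧ m ≤ n then ((n - m + 1 : ℕ) : ℂ) * kc m S p (n - m + 1) i j else 0)
      + (if hg : 2 ≤ m ∧ m ≤ n then ∑ a ∈ (Finset.range (n - m + 1)).attach,
          ∑ k, PowerSeries.coeff a.1 (S i k) * kc m S p (n - m - a.1) k j else 0))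
termination_by n + (if i = j then m - 1 else 0)
decreasing_by
  · have := a.2; simp only [Finset.mem_range] at this
    rcases eq_or_ne k j with h | h <;> simp [h, hij] <;> omega
  · have := a.2; simp only [Finset.mem_range] at this
    simp [hij]; omega
  · simp [hij]; omega
  · have := a.2; simp only [Finset.mem_range] at this
    rcases eq_or_ne k j with h | h <;> simp [h, hij] <;> omega

lemma kc_zero {r m : ℕ} (S : Matrix (Fin r) (Fin r) (PowerSeries ℂ)) (p : ℕ → PowerSeries ℂ)
    (hm : 2 ≤ m) (i j : Fin r) : kc m S p 0 i j = if i = j then 1 else 0 := by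
  rw [kc]
  rcases eq_or_ne i j with h | h
  · simp [h]
  · have h2 : ¬(2 ≤ m ∧ m = 0) := by omega
    simp [h, h2]

open Finset in
lemma key2_coeff {r m : ℕ} (hm : 2 ≤ m) (S : Matrix (Fin r) (Fin r) (PowerSeries ℂ))
    (p : ℕ → PowerSeries ℂ)
    (hdist : ∀ i j : Fin r, i ≠ j →
      PowerSeries.constantCoeff (p i.1) ≠ PowerSeries.constantCoeff (p j.1))
    (n : ℕ) (i j : Fin r) :
    (if m ≤ n then (((n - m : ℕ) : ℂ) + 1) * kc m S p (n - m + 1) i j else 0)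
    + (∑ a ∈ Finset.range (n + 1),
        PowerSeries.coeff a (p i.1 - p j.1) * kc m S p (n - a) i j)
    + (if m ≤ n then ∑ a ∈ Finset.range (n - m + 1),
        ∑ k, PowerSeries.coeff a (S i k) * kc m S p (n - m - a) k j else 0) = 0 := by
  rcases eq_or_ne i j with rfl | hij
  · have h2 : ∑ a ∈ Finset.range (n + 1),
        PowerSeries.coeff a (p i.1 - p i.1) * kc m S p (n - a) i i = 0 := by
      simp
    rw [h2, add_zero]
    by_cases hn : m ≤ n
    · rw [if_pos hn, if_pos hn]
      have hq : (n - m + 1 : ℕ) ≠ 0 := by omega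
      rw [kc, dif_pos rfl, dif_neg hq]
      have harr : ∀ a : ℕ, n - m + 1 - 1 - a = n - m - a := by omega
      have hc : ((n - m + 1 : ℕ) : ℂ) ≠ 0 := by exact_mod_cast hq
      rw [Finset.sum_attach (Finset.range (n - m + 1))
        (fun a => ∑ k, PowerSeries.coeff a (S i k) * kc m S p (n - m + 1 - 1 - a) k i)]
      simp only [harr]
      set T := ∑ a ∈ Finset.range (n - m + 1),
        ∑ k, PowerSeries.coeff a (S i k) * kc m S p (n - m - a) k i with hT
      have hcast : (((n - m : ℕ) : ℂ) + 1) = ((n - m + 1 : ℕ) : ℂ) := by push_cast; ring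
      rw [hcast]
      linear_combination (-T) * mul_inv_cancel₀ hc
    · simp [hn]
  · have hq : PowerSeries.constantCoeff (p i.1) - PowerSeries.constantCoeff (p j.1) ≠ 0 :=
      sub_ne_zero_of_ne (hdist i j hij)
    rw [Finset.sum_range_succ' (fun a => PowerSeries.coeff a (p i.1 - p j.1)
        * kc m S p (n - a) i j) n]
    have h0 : PowerSeries.coeff 0 (p i.1 - p j.1) * kc m S p (n - 0) i j
        = (PowerSeries.constantCoeff (p i.1) - PowerSeries.constantCoeff (p j.1))
          * kc m S p n i j := by
      simp [PowerSeries.coeff_zero_eq_constantCoeff]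
    rw [h0]
    have hunf : (PowerSeries.constantCoeff (p i.1) - PowerSeries.constantCoeff (p j.1))
        * kc m S p n i j =
        -((∑ a ∈ Finset.range n,
            PowerSeries.coeff (a + 1) (p i.1 - p j.1) * kc m S p (n - (a + 1)) i j)
          + (if m ≤ n then ((n - m + 1 : ℕ) : ℂ) * kc m S p (n - m + 1) i j else 0)
          + (if m ≤ n then ∑ a ∈ Finset.range (n - m + 1),
              ∑ k, PowerSeries.coeff a (S i k) * kc m S p (n - m - a) k j else 0)) := by
      rw [kc, dif_neg hij]
      rw [Finset.sum_attach (Finset.range n)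
        (fun a => PowerSeries.coeff (a + 1) (p i.1 - p j.1) * kc m S p (n - (a + 1)) i j)]
      by_cases hmn : m ≤ n
      · rw [dif_pos ⟨hm, hmn⟩, dif_pos ⟨hm, hmn⟩, if_pos hmn, if_pos hmn]
        rw [Finset.sum_attach (Finset.range (n - m + 1))
          (fun a => ∑ k, PowerSeries.coeff a (S i k) * kc m S p (n - m - a) k j)]
        field_simp
        try ring
      · rw [dif_neg (fun h => hmn h.2), dif_neg (fun h => hmn h.2), if_neg hmn, if_neg hmn]
        field_simp
        try ring
    rw [hunf]
    have hcast : ∀ hmn : m ≤ n, (((n - m : ℕ) : ℂ) + 1) = ((n - m + 1 : ℕ) : ℂ) := by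
      intro _; push_cast; ring
    by_cases hmn : m ≤ n
    · rw [if_pos hmn, if_pos hmn, hcast hmn]; ring
    · rw [if_neg hmn, if_neg hmn]; ring

open Finset in
lemma key2 {r m : ℕ} (hm : 2 ≤ m) (B : Matrix (Fin r) (Fin r) (PowerSeries ℂ))
    (p : ℕ → PowerSeries ℂ)
    (hdvd : ∀ i j, (PowerSeries.X : PowerSeries ℂ) ^ m ∣
      (B i j - if i = j then p i.1 else 0))
    (hdist : ∀ i j : Fin r, i ≠ j →
      PowerSeries.constantCoeff (p i.1) ≠ PowerSeries.constantCoeff (p j.1)) :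
    ∃ C : Matrix (Fin r) (Fin r) (PowerSeries ℂ),
      (∀ i j, PowerSeries.constantCoeff (C i j) = if i = j then 1 else 0) ∧
      ∀ i j, (PowerSeries.X : PowerSeries ℂ) ^ m * psDeriv (C i j)
        + ∑ k, B i k * C k j = C i j * p j.1 := by
  classical
  choose S hS using hdvd
  have hB : ∀ i j, B i j = (if i = j then p i.1 else 0)
      + (PowerSeries.X : PowerSeries ℂ) ^ m * S i j := by
    intro i j
    have := hS i j
    linear_combination this
  set C : Matrix (Fin r) (Fin r) (PowerSeries ℂ) :=
    Matrix.of fun i j => PowerSeries.mk fun n => kc m S p n i j with hC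
  have hCij : ∀ i j n, PowerSeries.coeff n (C i j) = kc m S p n i j := by
    intro i j n; simp [hC]
  refine ⟨C, ?_, ?_⟩
  · intro i j
    rw [← PowerSeries.coeff_zero_eq_constantCoeff_apply, hCij, kc_zero S p hm]
  · intro i j
    have Ekey : (PowerSeries.X : PowerSeries ℂ) ^ m * psDeriv (C i j)
        + (p i.1 - p j.1) * C i j
        + (PowerSeries.X : PowerSeries ℂ) ^ m * (∑ k, S i k * C k j) = 0 := by
      ext n
      have e1 : PowerSeries.coeff n ((PowerSeries.X : PowerSeries ℂ) ^ m * psDeriv (C i j))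
          = if m ≤ n then (((n - m : ℕ) : ℂ) + 1) * kc m S p (n - m + 1) i j else 0 := by
        rw [PowerSeries.coeff_X_pow_mul']
        split_ifs with h
        · rw [coeff_psDeriv, hCij]
        · rfl
      have e2 : PowerSeries.coeff n ((p i.1 - p j.1) * C i j)
          = ∑ a ∈ Finset.range (n + 1),
              PowerSeries.coeff a (p i.1 - p j.1) * kc m S p (n - a) i j := by
        rw [PowerSeries.coeff_mul, Finset.Nat.sum_antidiagonal_eq_sum_range_succ_mk]
        exact Finset.sum_congr rfl fun a _ => by rw [hCij]
      have e3 : PowerSeries.coeff n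
            ((PowerSeries.X : PowerSeries ℂ) ^ m * (∑ k, S i k * C k j))
          = if m ≤ n then ∑ a ∈ Finset.range (n - m + 1),
              ∑ k, PowerSeries.coeff a (S i k) * kc m S p (n - m - a) k j else 0 := by
        rw [PowerSeries.coeff_X_pow_mul']
        split_ifs with h
        · rw [map_sum]
          rw [Finset.sum_comm]
          refine Finset.sum_congr rfl fun k _ => ?_
          rw [PowerSeries.coeff_mul, Finset.Nat.sum_antidiagonal_eq_sum_range_succ_mk]
          refine Finset.sum_congr rfl fun a _ => by rw [hCij]
        · rfl
      rw [map_add, map_add, map_zero, e1, e2, e3]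
      exact key2_coeff hm S p hdist n i j
    have hBsum : ∑ k, B i k * C k j = p i.1 * C i j
        + (PowerSeries.X : PowerSeries ℂ) ^ m * (∑ k, S i k * C k j) := by
      have step : ∀ k : Fin r, B i k * C k j
          = (if i = k then p i.1 * C k j else 0)
            + (PowerSeries.X : PowerSeries ℂ) ^ m * (S i k * C k j) := by
        intro k
        rw [hB i k]
        rcases eq_or_ne i k with h | h
        · simp only [if_pos h]; ring
        · simp only [if_neg h]; ring
      rw [Finset.sum_congr rfl fun k _ => step k, Finset.sum_add_distrib,
        Finset.sum_ite_eq Finset.univ i (fun k => p i.1 * C k j), if_pos (Finset.mem_univ i),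
        ← Finset.mul_sum]
    rw [hBsum]
    linear_combination Ekey

/-- the mod-`z^m` triangular diagonalization column recursion -/
def k1col {r : ℕ} (B : Matrix (Fin r) (Fin r) (PowerSeries ℂ)) (p : ℕ → PowerSeries ℂ)
    (j : Fin r) (i : Fin r) : PowerSeries ℂ :=
  if i = j then 1
  else if hij : j < i then
    -Ring.inverse (B i i - p j.1) *
      (B i j + ∑ k ∈ (Finset.Ioo j i).attach, B i k.1 * k1col B p j k.1)
  else 0
termination_by i.1
decreasing_by
  have := Finset.mem_Ioo.mp k.2
  exact this.2

lemma k1col_diag {r : ℕ} (B : Matrix (Fin r) (Fin r) (PowerSeries ℂ)) (p : ℕ → PowerSeries ℂ)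
    (j : Fin r) : k1col B p j j = 1 := by
  rw [k1col]; simp

lemma k1col_upper {r : ℕ} (B : Matrix (Fin r) (Fin r) (PowerSeries ℂ)) (p : ℕ → PowerSeries ℂ)
    {i j : Fin r} (h : i < j) : k1col B p j i = 0 := by
  rw [k1col, if_neg h.ne, dif_neg (not_lt_of_gt h)]

open Finset in
lemma key1 {r m : ℕ} (hm : 1 ≤ m) (B : Matrix (Fin r) (Fin r) (PowerSeries ℂ))
    (p : ℕ → PowerSeries ℂ)
    (hup : ∀ i j : Fin r, i < j → (PowerSeries.X : PowerSeries ℂ) ^ m ∣ B i j)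
    (hdiag : ∀ i : Fin r, (PowerSeries.X : PowerSeries ℂ) ^ m ∣ (B i i - p i.1))
    (hdist : ∀ i j : Fin r, i ≠ j →
      PowerSeries.constantCoeff (p i.1) ≠ PowerSeries.constantCoeff (p j.1)) :
    ∃ C0 B1 : Matrix (Fin r) (Fin r) (PowerSeries ℂ), IsUnit C0.det ∧
      ((PowerSeries.X : PowerSeries ℂ) ^ m • mDeriv C0 + B * C0 = C0 * B1) ∧
      (∀ i j, (PowerSeries.X : PowerSeries ℂ) ^ m ∣ (B1 i j - if i = j then p i.1 else 0)) := by
  classical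
  set a : Fin r → ℂ := fun i => PowerSeries.constantCoeff (p i.1) with ha
  have hccB : ∀ i : Fin r, PowerSeries.constantCoeff (B i i) = a i := by
    intro i
    obtain ⟨s, hs⟩ := hdiag i
    have : PowerSeries.constantCoeff (B i i - p i.1)
        = PowerSeries.constantCoeff ((PowerSeries.X : PowerSeries ℂ) ^ m * s) := by rw [hs]
    rw [map_sub, map_mul, map_pow, PowerSeries.constantCoeff_X,
      zero_pow (by omega : m ≠ 0), zero_mul, sub_eq_zero] at this
    exact this
  have hunit : ∀ i j : Fin r, j < i → IsUnit (B i i - p j.1) := by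
    intro i j hji
    rw [PowerSeries.isUnit_iff_constantCoeff, map_sub, hccB]
    exact (sub_ne_zero_of_ne (hdist i j hji.ne')).isUnit
  set C0 : Matrix (Fin r) (Fin r) (PowerSeries ℂ) :=
    Matrix.of fun i j => k1col B p j i with hC0
  have hC0lt : ∀ i j : Fin r, i < j → C0 i j = 0 := fun i j h => k1col_upper B p h
  have hC0diag : ∀ i : Fin r, C0 i i = 1 := fun i => k1col_diag B p i
  have hdet : IsUnit C0.det := by
    have htri : C0.BlockTriangular OrderDual.toDual := by
      intro i j h
      exact hC0lt i j h
    rw [Matrix.det_of_lowerTriangular C0 htri]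
    simp [hC0diag]
  set P : Matrix (Fin r) (Fin r) (PowerSeries ℂ) := Matrix.diagonal (fun i => p i.1) with hP
  have hdiv : ∀ i j, (PowerSeries.X : PowerSeries ℂ) ^ m ∣ (B * C0 - C0 * P) i j := by
    intro i j
    have hBC : (B * C0) i j = ∑ k, B i k * k1col B p j k := by
      simp [Matrix.mul_apply, hC0]
    have hCP : (C0 * P) i j = k1col B p j i * p j.1 := by
      simp [hP, Matrix.mul_diagonal, hC0]
    rw [Matrix.sub_apply, hBC, hCP]
    rcases lt_trichotomy i j with hij | hij | hij
    · rw [k1col_upper B p hij, zero_mul, sub_zero]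
      refine Finset.dvd_sum fun k _ => ?_
      rcases eq_or_ne k j with rfl | hkj
      · rw [k1col_diag]; exact (hup i k hij).mul_right _
      · rcases lt_or_gt_of_ne hkj with h1 | h1
        · rw [k1col_upper B p h1, mul_zero]; exact dvd_zero _
        · exact (hup i k (hij.trans h1)).mul_right _
    · subst hij
      have hsplit : (∑ k, B i k * k1col B p i k) - k1col B p i i * p i.1
          = (B i i - p i.1) + ∑ k ∈ Finset.univ.erase i, B i k * k1col B p i k := by
        rw [← Finset.add_sum_erase Finset.univ (fun k => B i k * k1col B p i k)
          (Finset.mem_univ i), k1col_diag, mul_one]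
        ring
      rw [hsplit]
      refine dvd_add (hdiag i) (Finset.dvd_sum fun k hk => ?_)
      have hki : k ≠ i := (Finset.mem_erase.mp hk).1
      rcases lt_or_gt_of_ne hki with h1 | h1
      · rw [k1col_upper B p h1, mul_zero]; exact dvd_zero _
      · exact (hup i k h1).mul_right _
    · have hu := hunit i j hij
      have hexp : k1col B p j i = -Ring.inverse (B i i - p j.1) *
          (B i j + ∑ k ∈ (Finset.Ioo j i).attach, B i k.1 * k1col B p j k.1) := by
        conv_lhs => rw [k1col]
        rw [if_neg hij.ne', dif_pos hij]
      rw [Finset.sum_attach (Finset.Ioo j i) (fun k => B i k * k1col B p j k)] at hexp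
      have hcan : (B i i - p j.1) * Ring.inverse (B i i - p j.1) = 1 :=
        Ring.mul_inverse_cancel _ hu
      have hcol : p j.1 * k1col B p j i
          = B i i * k1col B p j i + B i j
            + ∑ k ∈ Finset.Ioo j i, B i k * k1col B p j k := by
        rw [hexp]
        linear_combination (B i j + ∑ k ∈ Finset.Ioo j i, B i k * k1col B p j k) * hcan
      set s : Finset (Fin r) := insert j (insert i (Finset.Ioo j i)) with hsdef
      have hjnot : j ∉ insert i (Finset.Ioo j i) := by
        simp only [Finset.mem_insert, Finset.mem_Ioo]
        push_neg
        exact ⟨hij.ne, fun h => absurd h (lt_irrefl j)⟩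
      have hinot : i ∉ Finset.Ioo j i := by simp [Finset.mem_Ioo]
      have hs : ∑ k ∈ s, B i k * k1col B p j k
          = B i j + B i i * k1col B p j i
            + ∑ k ∈ Finset.Ioo j i, B i k * k1col B p j k := by
        rw [hsdef, Finset.sum_insert hjnot, Finset.sum_insert hinot, k1col_diag, mul_one]
        ring
      have hrw : (∑ k, B i k * k1col B p j k) - k1col B p j i * p j.1
          = ∑ k ∈ Finset.univ \ s, B i k * k1col B p j k := by
        rw [← Finset.sum_sdiff (Finset.subset_univ s), hs]
        linear_combination -hcol
      rw [hrw]
      refine Finset.dvd_sum fun k hk => ?_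
      have hks : k ∉ s := (Finset.mem_sdiff.mp hk).2
      simp only [hsdef, Finset.mem_insert, Finset.mem_Ioo, not_or, not_and_or] at hks
      obtain ⟨hkj, hki, hmid⟩ := hks
      rcases hmid with h1 | h1
      · have : k < j := by
          rcases lt_or_gt_of_ne hkj with h | h
          · exact h
          · exact absurd h h1
        rw [k1col_upper B p this, mul_zero]; exact dvd_zero _
      · have : i < k := by
          rcases lt_or_gt_of_ne hki with h | h
          · exact absurd h h1
          · exact h
        exact (hup i k this).mul_right _
  set E : Matrix (Fin r) (Fin r) (PowerSeries ℂ) :=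
    (PowerSeries.X : PowerSeries ℂ) ^ m • mDeriv C0 + B * C0 with hE
  refine ⟨C0, C0⁻¹ * E, hdet, ?_, ?_⟩
  · rw [← Matrix.mul_assoc, Matrix.mul_nonsing_inv C0 hdet, Matrix.one_mul, hE]
  · intro i j
    have h1 : C0⁻¹ * (C0 * P) = P := by
      rw [← Matrix.mul_assoc, Matrix.nonsing_inv_mul C0 hdet, Matrix.one_mul]
    have hBP : (C0⁻¹ * E) i j - (if i = j then p i.1 else 0)
        = (C0⁻¹ * ((PowerSeries.X : PowerSeries ℂ) ^ m • mDeriv C0 + (B * C0 - C0 * P))) i j := by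
      have h2 : (C0⁻¹ * ((PowerSeries.X : PowerSeries ℂ) ^ m • mDeriv C0 + (B * C0 - C0 * P)))
          = C0⁻¹ * E - P := by
        rw [hE]
        have : (PowerSeries.X : PowerSeries ℂ) ^ m • mDeriv C0 + (B * C0 - C0 * P)
            = ((PowerSeries.X : PowerSeries ℂ) ^ m • mDeriv C0 + B * C0) - C0 * P := by
          abel
        rw [this, Matrix.mul_sub, h1]
      rw [h2, Matrix.sub_apply]
      congr 1
    rw [hBP, Matrix.mul_apply]
    refine Finset.dvd_sum fun k _ => ?_
    refine Dvd.dvd.mul_left ?_ _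
    rw [Matrix.add_apply, Matrix.smul_apply, smul_eq_mul]
    exact dvd_add (Dvd.intro _ rfl) (hdiv k j)

lemma mem_zPow_iff {r n : ℕ} (v : Fin r → PowerSeries ℂ) :
    v ∈ zPow r n ↔ ∀ t, (PowerSeries.X : PowerSeries ℂ) ^ n ∣ v t := by
  constructor
  · intro h t
    exact Ideal.mem_span_singleton.mp (h t (Set.mem_univ t))
  · intro h t _
    exact Ideal.mem_span_singleton.mpr (h t)

/-- **Generic exponents force the unramified decomposition.** Let `∇` be a
connection of pole order `m ≥ 2` on a free `ℂ⟦z⟧`-module `V` of rank `r`, and let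
`ν_j = p_j·dz/z^m` (with `p j` of degree `< m`) have pairwise distinct leading
coefficients `a_{j,0} = p_j(0)`. If `V/z^m V` carries a filtration (given here by
its preimage `l j ⊇ z^m·V` in `V`) with free rank-one graded pieces over
`ℂ[z]/(z^m)`, stable under the induced `ℂ[z]/(z^m)`-linear map `D_m`, on whose
`j`-th graded piece `D_m` acts as multiplication by `p j`, then
`(V, ∇) ≅ V(ν_0,1) ⊕ ⋯ ⊕ V(ν_{r-1},1)` as modules with connection. -/
theorem generic_exponents_decomposition (r m : ℕ) (hr : 1 ≤ r) (hm : 2 ≤ m)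
    (D : (Fin r → PowerSeries ℂ) → (Fin r → PowerSeries ℂ))
    (hD : IsConnection m r D)
    (p : ℕ → PowerSeries ℂ)
    (hpbd : ∀ j < r, ∀ t, m ≤ t → PowerSeries.coeff t (p j) = 0)
    (hdist : ∀ j₁ < r, ∀ j₂ < r, j₁ ≠ j₂ →
      PowerSeries.constantCoeff (p j₁) ≠ PowerSeries.constantCoeff (p j₂))
    (l : ℕ → Submodule (PowerSeries ℂ) (Fin r → PowerSeries ℂ))
    (hl0 : l 0 = ⊤) (hlr : l r = zPow r m)
    (hmono : ∀ j < r, l (j + 1) ≤ l j)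
    (hstab : ∀ j < r, ∀ v ∈ l j, D v ∈ l j)
    (hfree : ∀ j < r, ∃ e ∈ l j,
      l j = Submodule.span (PowerSeries ℂ) {e} ⊔ l (j + 1) ∧
      ∀ a : PowerSeries ℂ, a • e ∈ l (j + 1) → (PowerSeries.X : PowerSeries ℂ) ^ m ∣ a)
    (heig : ∀ j < r, ∀ v ∈ l j, D v - p j • v ∈ l (j + 1)) :
    ∃ Φ : (Fin r → PowerSeries ℂ) ≃ₗ[PowerSeries ℂ] (Fin r → PowerSeries ℂ),
      ∀ v, Φ (D v) = fun i : Fin r =>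
        (PowerSeries.X : PowerSeries ℂ) ^ m * psDeriv (Φ v i) + p (i : ℕ) * Φ v i := by
  classical
  set gv : ℕ → (Fin r → PowerSeries ℂ) := fun j => if h : j < r then (hfree j h).choose else 0 with hgv
  have hgmem : ∀ j, ∀ h : j < r, gv j ∈ l j := by
    intro j h
    simp only [hgv, dif_pos h]
    exact (hfree j h).choose_spec.1
  have hgspan : ∀ j, ∀ h : j < r,
      l j = Submodule.span (PowerSeries ℂ) {gv j} ⊔ l (j + 1) := by
    intro j h
    simp only [hgv, dif_pos h]
    exact (hfree j h).choose_spec.2.1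
  have hgdvd : ∀ j, ∀ h : j < r, ∀ a : PowerSeries ℂ,
      a • gv j ∈ l (j + 1) → (PowerSeries.X : PowerSeries ℂ) ^ m ∣ a := by
    intro j h
    simp only [hgv, dif_pos h]
    exact (hfree j h).choose_spec.2.2
  have hchain : ∀ s t : ℕ, s ≤ t → t ≤ r → l t ≤ l s := by
    intro s t hst
    induction hst with
    | refl => exact fun _ => le_rfl
    | @step t' hst' ih =>
      intro h
      exact le_trans (hmono t' (by omega)) (ih (by omega))
  have hzl : ∀ t : ℕ, t ≤ r → zPow r m ≤ l t := by
    intro t ht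
    rw [← hlr]
    exact hchain t r ht le_rfl
  have htop : (⊤ : Submodule (PowerSeries ℂ) (Fin r → PowerSeries ℂ)) ≤
      Submodule.span (PowerSeries ℂ) (Set.range fun i : Fin r => gv i.1) ⊔ zPow r m := by
    have aux : ∀ d t : ℕ, t + d = r → l t ≤
        Submodule.span (PowerSeries ℂ) (Set.range fun i : Fin r => gv i.1) ⊔ zPow r m := by
      intro d
      induction d with
      | zero => intro t ht; rw [(by omega : t = r), hlr]; exact le_sup_right
      | succ d ih =>
        intro t ht
        have htr : t < r := by omega
        rw [hgspan t htr]
        refine sup_le ?_ (ih (t + 1) (by omega))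
        refine le_trans ?_ le_sup_left
        refine Submodule.span_mono ?_
        intro x hx
        rw [Set.mem_singleton_iff] at hx
        exact ⟨⟨t, htr⟩, hx.symm⟩
    rw [← hl0]
    exact aux r 0 (by omega)
  have claim : ∀ t : ℕ, t ≤ r → ∀ c : Fin r → PowerSeries ℂ,
      (∑ i, c i • gv i.1) ∈ l t → ∀ i : Fin r, (i : ℕ) < t →
      (PowerSeries.X : PowerSeries ℂ) ^ m ∣ c i := by
    intro t
    induction t with
    | zero => intro _ _ _ i hi; omega
    | succ t ih =>
      intro htr c hmem i hit
      have hmemt : (∑ i, c i • gv i.1) ∈ l t :=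
        hmono t (by omega) hmem
      have hct := ih (by omega) c hmemt
      by_cases hi : (i : ℕ) < t
      · exact hct i hi
      · have hieq : (i : ℕ) = t := by omega
        have hsub : c i • gv i.1 = (∑ k, c k • gv k.1)
            - ∑ k ∈ Finset.univ.erase i, c k • gv k.1 := by
          rw [← Finset.add_sum_erase Finset.univ (fun k => c k • gv k.1) (Finset.mem_univ i)]
          abel
        have hothers : (∑ k ∈ Finset.univ.erase i, c k • gv k.1) ∈ l (t + 1) := by
          refine Submodule.sum_mem _ fun k hk => ?_
          have hki : k ≠ i := (Finset.mem_erase.mp hk).1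
          by_cases hkt : (k : ℕ) < t
          · refine hzl (t + 1) (by omega) ?_
            rw [mem_zPow_iff]
            intro s
            exact (hct k hkt).mul_right _
          · have hkgt : t + 1 ≤ (k : ℕ) := by
              rcases Nat.lt_or_ge (k : ℕ) (t + 1) with h | h
              · exfalso; apply hki; apply Fin.ext; omega
              · exact h
            exact Submodule.smul_mem _ _
              (hchain (t + 1) (k : ℕ) hkgt (by omega) (hgmem k.1 k.2))
        have hmem1 : c i • gv i.1 ∈ l (t + 1) := by
          rw [hsub]
          exact Submodule.sub_mem _ hmem hothers
        rw [hieq] at hmem1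
        exact hgdvd t (by omega) (c i) hmem1
  -- the matrix of the filtration basis, and its invertibility
  set G : Matrix (Fin r) (Fin r) (PowerSeries ℂ) :=
    Matrix.of fun t i => gv i.1 t with hG
  have hdetG : IsUnit G.det := by
    rw [PowerSeries.isUnit_iff_constantCoeff, RingHom.map_det, RingHom.mapMatrix_apply]
    set G0 : Matrix (Fin r) (Fin r) ℂ := G.map (PowerSeries.constantCoeff) with hG0
    rw [← Matrix.isUnit_iff_isUnit_det]
    rw [← Matrix.mulVec_surjective_iff_isUnit]
    intro y
    have hY : (fun t => PowerSeries.C (y t)) ∈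
        Submodule.span (PowerSeries ℂ) (Set.range fun i : Fin r => gv i.1) ⊔ zPow r m :=
      htop (Submodule.mem_top)
    rw [Submodule.mem_sup] at hY
    obtain ⟨x, hx, z, hz, hxz⟩ := hY
    rw [Submodule.mem_span_range_iff_exists_fun] at hx
    obtain ⟨c, hc⟩ := hx
    refine ⟨fun i => PowerSeries.constantCoeff (c i), ?_⟩
    funext t
    have hzt : PowerSeries.constantCoeff (z t) = 0 := by
      obtain ⟨s, hs⟩ := (mem_zPow_iff z).mp hz t
      rw [hs, map_mul, map_pow, PowerSeries.constantCoeff_X, zero_pow (by omega : m ≠ 0),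
        zero_mul]
    have hxt : x t = ∑ i, c i * gv i.1 t := by
      rw [← hc, Finset.sum_apply]
      exact Finset.sum_congr rfl fun i _ => rfl
    have h1 : PowerSeries.constantCoeff (x t) + PowerSeries.constantCoeff (z t)
        = PowerSeries.constantCoeff (PowerSeries.C (y t)) := by
      rw [← map_add]
      exact congrArg _ (congrFun hxz t)
    rw [hzt, add_zero, PowerSeries.constantCoeff_C, hxt, map_sum] at h1
    rw [Matrix.mulVec]
    rw [← h1]
    refine Finset.sum_congr rfl fun i _ => ?_
    simp [hG0, hG, Matrix.map_apply, mul_comm]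
  -- the connection matrix B
  set DG : Matrix (Fin r) (Fin r) (PowerSeries ℂ) :=
    Matrix.of (fun t i => D (fun s => G s i) t) with hDG
  set B : Matrix (Fin r) (Fin r) (PowerSeries ℂ) := G⁻¹ * DG with hB
  have hGB : G * B = DG := by
    rw [hB, ← Matrix.mul_assoc, Matrix.mul_nonsing_inv G hdetG, Matrix.one_mul]
  have hDgcol : ∀ i : Fin r, D (fun s => G s i) = fun t => ∑ k, G t k * B k i := by
    intro i; funext t
    calc D (fun s => G s i) t = DG t i := rfl
    _ = (G * B) t i := by rw [hGB]
    _ = ∑ k, G t k * B k i := Matrix.mul_apply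
  have hgvcol : ∀ i : Fin r, (fun s => G s i) = gv i.1 := fun i => rfl
  -- divisibility constraints on B
  have hBdvd : ∀ k i : Fin r, (i : ℕ) ≤ (k : ℕ) →
      (PowerSeries.X : PowerSeries ℂ) ^ m ∣ (B i k - if i = k then p k.1 else 0) := by
    intro k
    set c : Fin r → PowerSeries ℂ := fun i => B i k - if i = k then p k.1 else 0 with hcdef
    have hsum : (∑ i, c i • gv i.1) = D (gv k.1) - p k.1 • gv k.1 := by
      funext t
      rw [Finset.sum_apply]
      have hterm : ∀ i : Fin r, (c i • gv i.1) t
          = G t i * B i k - (if i = k then p k.1 else 0) * gv i.1 t := by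
        intro i
        show c i * gv i.1 t = _
        rw [hcdef]
        have : G t i = gv i.1 t := rfl
        rw [← this]
        ring
      rw [Finset.sum_congr rfl fun i _ => hterm i, Finset.sum_sub_distrib]
      have h1 : ∑ i, G t i * B i k = D (gv k.1) t := by
        rw [← hgvcol k, hDgcol k]
      have h2 : ∑ i : Fin r, (if i = k then p k.1 else 0) * gv i.1 t = p k.1 * gv k.1 t := by
        rw [Finset.sum_congr rfl (fun i _ => ite_mul (i = k) (p k.1) 0 (gv i.1 t))]
        simp
      rw [h1, h2]
      rfl
    have hmemk : D (gv k.1) - p k.1 • gv k.1 ∈ l (k.1 + 1) :=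
      heig k.1 k.2 (gv k.1) (hgmem k.1 k.2)
    rw [← hsum] at hmemk
    intro i hik
    exact claim (k.1 + 1) (by omega) c hmemk i (by omega)
  have hup : ∀ i j : Fin r, i < j → (PowerSeries.X : PowerSeries ℂ) ^ m ∣ B i j := by
    intro i j h
    have := hBdvd j i (le_of_lt h)
    rwa [if_neg (Fin.ne_of_lt h), sub_zero] at this
  have hdiagB : ∀ i : Fin r, (PowerSeries.X : PowerSeries ℂ) ^ m ∣ (B i i - p i.1) := by
    intro i
    have := hBdvd i i le_rfl
    rwa [if_pos rfl] at this
  have hdist' : ∀ i j : Fin r, i ≠ j →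
      PowerSeries.constantCoeff (p i.1) ≠ PowerSeries.constantCoeff (p j.1) :=
    fun i j hij => hdist i.1 i.2 j.1 j.2 (fun h => hij (Fin.ext h))
  -- gauge transformations
  obtain ⟨C0, B1, hdetC0, heq1, hdvd1⟩ := key1 (by omega) B p hup hdiagB hdist'
  obtain ⟨C1, hccC1, heq2⟩ := key2 hm B1 p hdvd1 hdist'
  set P : Matrix (Fin r) (Fin r) (PowerSeries ℂ) := Matrix.diagonal (fun i : Fin r => p i.1)
    with hP
  have heq2' : (PowerSeries.X : PowerSeries ℂ) ^ m • mDeriv C1 + B1 * C1 = C1 * P := by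
    refine Matrix.ext fun i j => ?_
    rw [Matrix.add_apply, Matrix.smul_apply, smul_eq_mul, Matrix.mul_apply, hP,
      Matrix.mul_diagonal]
    exact heq2 i j
  set Ct : Matrix (Fin r) (Fin r) (PowerSeries ℂ) := C0 * C1 with hCt
  have heqt : (PowerSeries.X : PowerSeries ℂ) ^ m • mDeriv Ct + B * Ct = Ct * P := by
    have e1 : (PowerSeries.X : PowerSeries ℂ) ^ m • (mDeriv C0 * C1)
        = ((PowerSeries.X : PowerSeries ℂ) ^ m • mDeriv C0) * C1 :=
      (Matrix.smul_mul _ _ _).symm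
    have e2 : (PowerSeries.X : PowerSeries ℂ) ^ m • (C0 * mDeriv C1)
        = C0 * ((PowerSeries.X : PowerSeries ℂ) ^ m • mDeriv C1) :=
      (Matrix.mul_smul _ _ _).symm
    rw [hCt, mDeriv_mul, smul_add, e1, e2, ← Matrix.mul_assoc B C0 C1,
      Matrix.mul_assoc C0 C1 P, ← heq2', Matrix.mul_add, ← Matrix.mul_assoc C0 B1 C1,
      ← heq1, Matrix.add_mul]
    abel
  have hdetC1 : IsUnit C1.det := by
    rw [PowerSeries.isUnit_iff_constantCoeff, RingHom.map_det, RingHom.mapMatrix_apply]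
    have hmap1 : C1.map (PowerSeries.constantCoeff) = (1 : Matrix (Fin r) (Fin r) ℂ) := by
      refine Matrix.ext fun i j => ?_
      rw [Matrix.map_apply, hccC1 i j, Matrix.one_apply]
    rw [hmap1, Matrix.det_one]
    exact isUnit_one
  set Mm : Matrix (Fin r) (Fin r) (PowerSeries ℂ) := G * Ct with hMm
  have hdetM : IsUnit Mm.det := by
    rw [hMm, Matrix.det_mul, hCt, Matrix.det_mul]
    exact hdetG.mul (hdetC0.mul hdetC1)
  set N : Matrix (Fin r) (Fin r) (PowerSeries ℂ) := Mm⁻¹ with hN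
  have hMN : Mm * N = 1 := Matrix.mul_nonsing_inv _ hdetM
  have hNM : N * Mm = 1 := Matrix.nonsing_inv_mul _ hdetM
  set Dhom : (Fin r → PowerSeries ℂ) →+ (Fin r → PowerSeries ℂ) :=
    AddMonoidHom.mk' D hD.1 with hDhom
  -- the eigencolumns
  have hcol : ∀ k : Fin r, D (fun t => Mm t k) = p k.1 • (fun t => Mm t k) := by
    intro k
    have hsplit : (fun t => Mm t k) = ∑ i, Ct i k • (fun s => G s i) := by
      funext t
      rw [Finset.sum_apply]
      simp only [Pi.smul_apply, smul_eq_mul]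
      rw [hMm, Matrix.mul_apply]
      exact Finset.sum_congr rfl fun i _ => mul_comm _ _
    rw [hsplit]
    rw [show D (∑ i, Ct i k • fun s => G s i) = ∑ i, D (Ct i k • fun s => G s i) from
      map_sum Dhom _ _]
    have hterm : ∀ i : Fin r, D (Ct i k • (fun s => G s i))
        = ((PowerSeries.X : PowerSeries ℂ) ^ m * psDeriv (Ct i k)) • (fun s => G s i)
          + Ct i k • (fun t => ∑ s, G t s * B s i) := by
      intro i
      rw [hD.2, hDgcol i]
    rw [Finset.sum_congr rfl (fun i _ => hterm i)]
    funext t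
    rw [Finset.sum_apply, Pi.smul_apply, smul_eq_mul]
    have hterm2 : ∀ i : Fin r,
        (((PowerSeries.X : PowerSeries ℂ) ^ m * psDeriv (Ct i k)) • (fun s => G s i)
          + Ct i k • (fun t => ∑ s, G t s * B s i)) t
        = ((PowerSeries.X : PowerSeries ℂ) ^ m * psDeriv (Ct i k)) * G t i
          + Ct i k * ∑ s, G t s * B s i := fun i => rfl
    rw [Finset.sum_congr rfl (fun i _ => hterm2 i), Finset.sum_add_distrib]
    have hfirst : ∑ i, ((PowerSeries.X : PowerSeries ℂ) ^ m * psDeriv (Ct i k)) * G t i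
        = ∑ s, G t s * (((PowerSeries.X : PowerSeries ℂ) ^ m • mDeriv Ct) s k) := by
      refine Finset.sum_congr rfl fun s _ => ?_
      rw [Matrix.smul_apply, smul_eq_mul]
      have : mDeriv Ct s k = psDeriv (Ct s k) := rfl
      rw [this]
      ring
    have hsecond : ∑ i, Ct i k * ∑ s, G t s * B s i
        = ∑ s, G t s * ((B * Ct) s k) := by
      have h1 : ∀ i : Fin r, Ct i k * ∑ s, G t s * B s i
          = ∑ s, G t s * (B s i * Ct i k) := by
        intro i
        rw [Finset.mul_sum]
        exact Finset.sum_congr rfl fun s _ => by ring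
      rw [Finset.sum_congr rfl fun i _ => h1 i, Finset.sum_comm]
      refine Finset.sum_congr rfl fun s _ => ?_
      rw [Matrix.mul_apply, Finset.mul_sum]
    rw [hfirst, hsecond, ← Finset.sum_add_distrib]
    have hcomb : ∑ s, (G t s * (((PowerSeries.X : PowerSeries ℂ) ^ m • mDeriv Ct) s k)
          + G t s * ((B * Ct) s k))
        = ∑ s, G t s * ((Ct * P) s k) := by
      refine Finset.sum_congr rfl fun s _ => ?_
      rw [← mul_add]
      congr 1
      have := congrFun (congrFun heqt s) k
      rw [Matrix.add_apply] at this
      exact this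
    rw [hcomb]
    have hfin : ∑ s, G t s * ((Ct * P) s k) = p k.1 * Mm t k := by
      have h1 : ∀ s : Fin r, (Ct * P) s k = Ct s k * p k.1 := by
        intro s
        rw [hP, Matrix.mul_diagonal]
      rw [Finset.sum_congr rfl fun s _ => by rw [h1 s]]
      rw [hMm, Matrix.mul_apply, Finset.mul_sum]
      exact Finset.sum_congr rfl fun s _ => by ring
    rw [hfin, congrFun hsplit t]
  -- build the equivalence
  have hiso1 : N.mulVecLin.comp Mm.mulVecLin = LinearMap.id := by
    rw [← Matrix.mulVecLin_mul, hNM, Matrix.mulVecLin_one]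
  have hiso2 : Mm.mulVecLin.comp N.mulVecLin = LinearMap.id := by
    rw [← Matrix.mulVecLin_mul, hMN, Matrix.mulVecLin_one]
  refine ⟨LinearEquiv.ofLinear N.mulVecLin Mm.mulVecLin hiso1 hiso2, ?_⟩
  intro v
  have hPhiw : ∀ w : Fin r → PowerSeries ℂ, (LinearEquiv.ofLinear N.mulVecLin Mm.mulVecLin hiso1 hiso2) w
      = N.mulVec w := fun w => by
    rw [LinearEquiv.ofLinear_apply, Matrix.mulVecLin_apply]
  set av : Fin r → PowerSeries ℂ := N.mulVec v with hav
  have hvM : v = Mm.mulVec av := by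
    rw [hav, Matrix.mulVec_mulVec, hMN, Matrix.one_mulVec]
  have hMv : ∀ b : Fin r → PowerSeries ℂ, Mm.mulVec b = ∑ k, b k • (fun t => Mm t k) := by
    intro b
    funext t
    rw [Finset.sum_apply, Matrix.mulVec]
    simp only [Pi.smul_apply, smul_eq_mul]
    exact Finset.sum_congr rfl fun k _ => mul_comm _ _
  have hDv : D v = Mm.mulVec (fun k =>
      (PowerSeries.X : PowerSeries ℂ) ^ m * psDeriv (av k) + p k.1 * av k) := by
    conv_lhs => rw [hvM]
    rw [hMv av]
    rw [show D (∑ k, av k • fun t => Mm t k) = ∑ k, D (av k • fun t => Mm t k) from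
      map_sum Dhom _ _]
    have hterm : ∀ k : Fin r, D (av k • (fun t => Mm t k))
        = ((PowerSeries.X : PowerSeries ℂ) ^ m * psDeriv (av k) + p k.1 * av k)
          • (fun t => Mm t k) := by
      intro k
      rw [hD.2, hcol k, smul_smul, add_smul, mul_comm (av k) (p k.1)]
    rw [Finset.sum_congr rfl fun k _ => hterm k]
    rw [hMv (fun k => (PowerSeries.X : PowerSeries ℂ) ^ m * psDeriv (av k) + p k.1 * av k)]
  rw [hPhiw, hPhiw, hDv, Matrix.mulVec_mulVec, hNM, Matrix.one_mulVec]
end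
end
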